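/- A proper submodule N of M is a weakly classical 1-absorbing prime submodule if and only if for all nonunits a, b, c ∈ R one has (N :_M abc) = (0 :_M abc) ∪ (N :_M ab) ∪ (N :_M c) as sets. -/
import Mathlib


/-- A proper submodule `N` of `M` is weakly classical 1-absorbing prime if whenever
`abcm ∈ N` and `abcm ≠ 0` for nonunits `a, b, c ∈ R` and `m ∈ M`, then `abm ∈ N` or `cm ∈ N`. -/
def IsWeaklyClassical1AbsorbingPrime {R : Type*} [CommRing R] {M : Type*} [AddCommGroup M]
    [Module R M] (N : Submodule R M) : Prop :=
  N ≠ ⊤ ∧ ∀ a b c : R, ∀ m : M, ¬ IsUnit a → ¬ IsUnit b → ¬ IsUnit c →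
    (a * b * c) • m ∈ N → (a * b * c) • m ≠ 0 → ((a * b) • m ∈ N ∨ c • m ∈ N)

/-- A proper ideal `I` of `R` is weakly 1-absorbing prime if whenever `abc ∈ I` and
`abc ≠ 0` for nonunits `a, b, c ∈ R`, then `ab ∈ I` or `c ∈ I`. -/
def IsWeakly1AbsorbingPrimeIdeal {R : Type*} [CommRing R] (I : Ideal R) : Prop :=
  I ≠ ⊤ ∧ ∀ a b c : R, ¬ IsUnit a → ¬ IsUnit b → ¬ IsUnit c →
    a * b * c ∈ I → a * b * c ≠ 0 → (a * b ∈ I ∨ c ∈ I)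

/-- A proper submodule `N` of `M` is weakly classical 1-absorbing prime iff
for all nonunits `a, b, c ∈ R`, `(N :_M abc) = (0 :_M abc) ∪ (N :_M ab) ∪ (N :_M c)`. -/
theorem stmt_12 {R : Type*} [CommRing R] [Nontrivial R] {M : Type*} [AddCommGroup M]
    [Module R M] [Nontrivial M] (N : Submodule R M) (hN : N ≠ ⊤) :
    IsWeaklyClassical1AbsorbingPrime N ↔
      ∀ a b c : R, ¬ IsUnit a → ¬ IsUnit b → ¬ IsUnit c →
        {m : M | (a * b * c) • m ∈ N} =
          {m : M | (a * b * c) • m = 0} ∪ {m : M | (a * b) • m ∈ N} ∪ {m : M | c • m ∈ N} := by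
  constructor
  · rintro ⟨-, h⟩ a b c ha hb hc
    ext m
    simp only [Set.mem_setOf_eq, Set.mem_union]
    constructor
    · intro hm
      by_cases hz : (a * b * c) • m = 0
      · exact Or.inl (Or.inl hz)
      · rcases h a b c m ha hb hc hm hz with h1 | h1
        · exact Or.inl (Or.inr h1)
        · exact Or.inr h1
    · rintro ((hz | h1) | h1)
      · rw [hz]; exact N.zero_mem
      · have : (a * b * c) • m = c • ((a * b) • m) := by
          rw [← mul_smul]; ring_nf
        rw [this]; exact N.smul_mem _ h1
      · have : (a * b * c) • m = (a * b) • (c • m) := by rw [← mul_smul]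
        rw [this]; exact N.smul_mem _ h1
  · intro h
    refine ⟨hN, fun a b c m ha hb hc hm hz => ?_⟩
    have := h a b c ha hb hc
    have hm' : m ∈ {m : M | (a * b * c) • m ∈ N} := hm
    rw [this] at hm'
    rcases hm' with (h1 | h1) | h1
    · exact absurd h1 hz
    · exact Or.inl h1
    · exact Or.inr h1
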